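/- Let h be an affine transformation of R^n that has a fixed point, and let {h^t} be a one-parameter group of affine transformations with h = h^1. Then {h^t} has a fixed point in R^n. -/

import Mathlib

/-- If a continuous one-parameter group `{h^t}` of affine transformations of `ℝⁿ`
is such that its time-one map `h = h^1` has a fixed point, then the whole
one-parameter group has a common fixed point in `ℝⁿ`. -/
theorem one_param_affine_group_fixed_point
    (n : ℕ)
    (h : ℝ → (EuclideanSpace ℝ (Fin n) ≃ᵃ[ℝ] EuclideanSpace ℝ (Fin n)))
    (h_zero : h 0 = AffineEquiv.refl ℝ (EuclideanSpace ℝ (Fin n)))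
    (h_add : ∀ s t : ℝ, h (s + t) = (h s).trans (h t))
    (h_cont : Continuous fun p : ℝ × EuclideanSpace ℝ (Fin n) => h p.1 p.2)
    (h_fix : ∃ z : EuclideanSpace ℝ (Fin n), h 1 z = z) :
    ∃ z : EuclideanSpace ℝ (Fin n), ∀ t : ℝ, h t z = z := by
  classical
  set E := EuclideanSpace ℝ (Fin n)
  obtain ⟨z₀, hz₀⟩ := h_fix
  set f : ℝ → E := fun t => h t z₀ with hf
  have hf_cont : Continuous f :=
    h_cont.comp (continuous_id.prodMk continuous_const)
  have hper : Function.Periodic f 1 := by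
    intro t
    show h (t + 1) z₀ = h t z₀
    rw [add_comm, h_add]
    simp [AffineEquiv.trans_apply, hz₀]
  refine ⟨∫ t in (0:ℝ)..1, f t, fun s => ?_⟩
  have hint : ∀ a b : ℝ, IntervalIntegrable f MeasureTheory.volume a b :=
    fun a b => hf_cont.intervalIntegrable a b
  -- the continuous linear part of `h s`
  let L : E →L[ℝ] E := LinearMap.toContinuousLinearMap (h s).linear.toLinearMap
  have key : ∀ x : E, h s x = L x + h s 0 := by
    intro x
    have := (h s).map_vadd (0 : E) x
    simpa [vadd_eq_add, L] using this
  rw [key]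
  rw [← L.intervalIntegral_comp_comm (hint 0 1)]
  have hLint : IntervalIntegrable (fun t => L (f t)) MeasureTheory.volume 0 1 :=
    (L.continuous.comp hf_cont).intervalIntegrable 0 1
  have hconst : (∫ t in (0:ℝ)..1, (h s 0 : E)) = h s 0 := by
    simp
  have step : (∫ t in (0:ℝ)..1, L (f t)) + h s 0
      = ∫ t in (0:ℝ)..1, (L (f t) + h s 0) := by
    rw [intervalIntegral.integral_add hLint (intervalIntegrable_const), hconst]
  rw [step]
  have integrand : ∀ t : ℝ, L (f t) + h s 0 = f (t + s) := by
    intro t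
    rw [← key]
    show h s (h t z₀) = h (t + s) z₀
    rw [h_add]
    simp [AffineEquiv.trans_apply]
  rw [intervalIntegral.integral_congr (g := fun t => f (t + s))
    (fun t _ => integrand t)]
  rw [intervalIntegral.integral_comp_add_right f s]
  have := hper.intervalIntegral_add_eq s 0
  simpa [add_comm] using this
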